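/- arXiv:2202.03503 — 2 statements merged into one kernel-verified Lean document; each statement's English description precedes it below -/
import Mathlib

section
/- Let s > n/2 and 0 < T < ∞. There exists a constant C = C(n, s, T) > 0 such that for all 1 < α < 2 and all t ∈ [0, T], the quantity ∫_{ℝⁿ} |exp(-t|ξ|^α) - exp(-t|ξ|²)|² (1+|ξ|²)^{-s} dξ is at most C²·(2-α)². -/
open MeasureTheory Real ENNReal Filter Set
noncomputable section

abbrev E (n : ℕ) := EuclideanSpace ℝ (Fin n)

/-- Key pointwise mean-value bound. -/
lemma key_mvt {T ε α t r : ℝ} (hT : 0 < T) (hε : 0 < ε) (hα1 : 1 < α) (hα2 : α < 2)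
    (ht0 : 0 ≤ t) (htT : t ≤ T) (hr : 0 ≤ r) :
    |Real.exp (-t * r ^ α) - Real.exp (-t * r ^ (2:ℝ))| ≤ (2 - α) * (T + ε⁻¹ * r ^ ε) := by
  have hα0 : (0:ℝ) < α := by linarith
  rcases hr.eq_or_lt with h0 | hrpos
  · subst h0
    rw [Real.zero_rpow (ne_of_gt hα0), Real.zero_rpow (by norm_num : (2:ℝ) ≠ 0)]
    simp only [sub_self, abs_zero]
    have : (0:ℝ) ≤ (0:ℝ) ^ ε := Real.rpow_nonneg le_rfl ε
    have h1 : (0:ℝ) ≤ T + ε⁻¹ * (0:ℝ) ^ ε := by positivity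
    have h2 : (0:ℝ) ≤ 2 - α := by linarith
    positivity
  · -- r > 0 : mean value theorem in the exponent β ∈ [α, 2]
    set g : ℝ → ℝ := fun β => Real.exp (-t * r ^ β) with hg
    set g' : ℝ → ℝ := fun β => Real.exp (-t * r ^ β) * (-t * (r ^ β * Real.log r)) with hg'
    have hderiv : ∀ β ∈ Set.Icc α 2, HasDerivWithinAt g (g' β) (Set.Icc α 2) β := by
      intro β _
      have h1 : HasDerivAt (fun β : ℝ => r ^ β) (r ^ β * Real.log r) β :=
        (Real.hasStrictDerivAt_const_rpow hrpos β).hasDerivAt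
      have h2 : HasDerivAt (fun β : ℝ => -t * r ^ β) (-t * (r ^ β * Real.log r)) β :=
        h1.const_mul (-t)
      exact (h2.exp).hasDerivWithinAt
    have hxexp : ∀ x : ℝ, 0 ≤ x → x * Real.exp (-x) ≤ 1 := by
      intro x hx
      have h1 : x ≤ Real.exp x := (Real.add_one_le_exp x).trans' (by linarith)
      calc x * Real.exp (-x) ≤ Real.exp x * Real.exp (-x) :=
            mul_le_mul_of_nonneg_right h1 (Real.exp_nonneg _)
        _ = 1 := by rw [← Real.exp_add]; simp
    have hbound : ∀ β ∈ Set.Icc α 2, ‖g' β‖ ≤ T + ε⁻¹ * r ^ ε := by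
      intro β hβ
      have hβ1 : 1 ≤ β := le_trans hα1.le hβ.1
      have hrb : 0 < r ^ β := Real.rpow_pos_of_pos hrpos β
      have habs : ‖g' β‖ = t * r ^ β * Real.exp (-(t * r ^ β)) * |Real.log r| := by
        rw [hg', Real.norm_eq_abs, abs_mul, abs_of_pos (Real.exp_pos _)]
        rw [show -t * (r ^ β * Real.log r) = -(t * r ^ β) * Real.log r by ring, abs_mul,
          abs_neg, abs_of_nonneg (by positivity : (0:ℝ) ≤ t * r ^ β)]
        rw [show -t * r ^ β = -(t * r ^ β) by ring]
        ring
      rw [habs]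
      rcases le_total r 1 with hr1 | hr1
      · -- r ≤ 1 : bound by T
        have hlog : |Real.log r| = -Real.log r := by
          rw [abs_of_nonpos (Real.log_nonpos hrpos.le hr1)]
        have hrβr : r ^ β ≤ r := by
          calc r ^ β ≤ r ^ (1:ℝ) := Real.rpow_le_rpow_of_exponent_ge hrpos hr1 hβ1
            _ = r := Real.rpow_one r
        have hrlog : r * (-Real.log r) ≤ 1 := by
          have h1 : Real.log r⁻¹ ≤ r⁻¹ - 1 :=
            Real.log_le_sub_one_of_pos (by positivity)
          rw [Real.log_inv] at h1
          have h2 : -Real.log r ≤ r⁻¹ := by linarith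
          calc r * (-Real.log r) ≤ r * r⁻¹ := by
                apply mul_le_mul_of_nonneg_left h2 hrpos.le
            _ = 1 := mul_inv_cancel₀ (ne_of_gt hrpos)
        have hexp1 : Real.exp (-(t * r ^ β)) ≤ 1 := by
          rw [Real.exp_le_one_iff]
          have : (0:ℝ) ≤ t * r ^ β := by positivity
          linarith
        have : t * r ^ β * Real.exp (-(t * r ^ β)) * |Real.log r|
            ≤ T * (r * (-Real.log r)) := by
          rw [hlog]
          have hlognn : 0 ≤ -Real.log r := by
            have := Real.log_nonpos hrpos.le hr1; linarith
          have h3 : t * r ^ β * Real.exp (-(t * r ^ β)) ≤ T * r := by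
            calc t * r ^ β * Real.exp (-(t * r ^ β)) ≤ t * r ^ β * 1 := by
                  apply mul_le_mul_of_nonneg_left hexp1 (by positivity)
              _ = t * r ^ β := mul_one _
              _ ≤ T * r := by
                  apply mul_le_mul htT hrβr hrb.le hT.le
          calc t * r ^ β * Real.exp (-(t * r ^ β)) * (-Real.log r)
              ≤ T * r * (-Real.log r) := mul_le_mul_of_nonneg_right h3 hlognn
            _ = T * (r * (-Real.log r)) := by ring
        refine this.trans ?_
        have h4 : T * (r * (-Real.log r)) ≤ T * 1 :=
          mul_le_mul_of_nonneg_left hrlog hT.le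
        have h5 : (0:ℝ) ≤ ε⁻¹ * r ^ ε := by positivity
        linarith
      · -- 1 ≤ r : bound by ε⁻¹ r^ε
        have hlog : |Real.log r| = Real.log r := abs_of_nonneg (Real.log_nonneg hr1)
        have h1 : t * r ^ β * Real.exp (-(t * r ^ β)) ≤ 1 :=
          hxexp (t * r ^ β) (by positivity)
        have h2 : Real.log r ≤ r ^ ε / ε := Real.log_le_rpow_div hrpos.le hε
        have : t * r ^ β * Real.exp (-(t * r ^ β)) * |Real.log r| ≤ 1 * (r ^ ε / ε) := by
          rw [hlog]
          exact mul_le_mul h1 h2 (Real.log_nonneg hr1) zero_le_one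
        refine this.trans ?_
        rw [one_mul, div_eq_inv_mul]
        linarith
    have := (convex_Icc α 2).norm_image_sub_le_of_norm_hasDerivWithin_le hderiv hbound
      (⟨le_refl α, hα2.le⟩ : α ∈ Set.Icc α 2) (⟨by linarith, le_refl 2⟩)
    -- this : ‖g 2 - g α‖ ≤ (T + ε⁻¹ * r ^ ε) * ‖2 - α‖
    rw [Real.norm_eq_abs, Real.norm_eq_abs, abs_of_nonneg (by linarith : (0:ℝ) ≤ 2 - α)]
      at this
    calc |Real.exp (-t * r ^ α) - Real.exp (-t * r ^ (2:ℝ))|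
        = |g 2 - g α| := by rw [abs_sub_comm]
      _ ≤ (T + ε⁻¹ * r ^ ε) * (2 - α) := this
      _ = (2 - α) * (T + ε⁻¹ * r ^ ε) := mul_comm _ _

set_option maxHeartbeats 1000000 in
theorem stmt2 (n : ℕ) (s T : ℝ) (hs : (n : ℝ) / 2 < s) (hT : 0 < T) :
    ∃ C > 0, ∀ α : ℝ, 1 < α → α < 2 → ∀ t ∈ Set.Icc (0:ℝ) T,
      (∫ ξ : E n, |Real.exp (-t * ‖ξ‖ ^ α) - Real.exp (-t * ‖ξ‖ ^ (2:ℝ))| ^ 2 *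
          (1 + ‖ξ‖ ^ 2) ^ (-s)) ≤ C ^ 2 * (2 - α) ^ 2 := by
  set ε : ℝ := (s - n / 2) / 2 with hεdef
  have hε : 0 < ε := by simp only [hεdef]; linarith
  set K : ℝ := 2 * T ^ 2 + 2 * ε⁻¹ ^ 2 with hK
  have hKpos : 0 < K := by positivity
  -- integrability of the dominating function
  have hint : Integrable (fun ξ : E n => ((1:ℝ) + ‖ξ‖ ^ 2) ^ (ε - s)) := by
    have hfr : (Module.finrank ℝ (E n) : ℝ) < 2 * (s - ε) := by
      rw [finrank_euclideanSpace, Fintype.card_fin]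
      simp only [hεdef]; linarith
    have h := integrable_rpow_neg_one_add_norm_sq (E := E n) (μ := volume) hfr
    rw [show -(2 * (s - ε)) / 2 = ε - s by ring] at h
    exact h
  have hintK : Integrable (fun ξ : E n => K * ((1:ℝ) + ‖ξ‖ ^ 2) ^ (ε - s)) :=
    hint.const_mul K
  set I : ℝ := ∫ ξ : E n, K * ((1:ℝ) + ‖ξ‖ ^ 2) ^ (ε - s) with hI
  have hInn : 0 ≤ I := by
    apply integral_nonneg; intro ξ; positivity
  refine ⟨Real.sqrt (max I 1), Real.sqrt_pos.2 (lt_of_lt_of_le one_pos (le_max_right _ _)), ?_⟩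
  intro α hα1 hα2 t ht
  obtain ⟨ht0, htT⟩ := ht
  have hCsq : Real.sqrt (max I 1) ^ 2 = max I 1 :=
    Real.sq_sqrt (le_trans zero_le_one (le_max_right _ _))
  have h2α : (0:ℝ) ≤ 2 - α := by linarith
  -- pointwise bound of the integrand
  have hpt : ∀ ξ : E n,
      |Real.exp (-t * ‖ξ‖ ^ α) - Real.exp (-t * ‖ξ‖ ^ (2:ℝ))| ^ 2 * (1 + ‖ξ‖ ^ 2) ^ (-s)
        ≤ (2 - α) ^ 2 * (K * ((1:ℝ) + ‖ξ‖ ^ 2) ^ (ε - s)) := by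
    intro ξ
    set r : ℝ := ‖ξ‖ with hr
    have hrnn : 0 ≤ r := norm_nonneg ξ
    have hb : |Real.exp (-t * r ^ α) - Real.exp (-t * r ^ (2:ℝ))|
        ≤ (2 - α) * (T + ε⁻¹ * r ^ ε) := key_mvt hT hε hα1 hα2 ht0 htT hrnn
    have hbase : (0:ℝ) < 1 + r ^ 2 := by positivity
    have hwnn : (0:ℝ) ≤ (1 + r ^ 2) ^ (-s) := Real.rpow_nonneg hbase.le _
    have hsq : |Real.exp (-t * r ^ α) - Real.exp (-t * r ^ (2:ℝ))| ^ 2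
        ≤ ((2 - α) * (T + ε⁻¹ * r ^ ε)) ^ 2 := by
      apply sq_le_sq' _ hb
      have := abs_nonneg (Real.exp (-t * r ^ α) - Real.exp (-t * r ^ (2:ℝ)))
      nlinarith [hb, this]
    have hsum : (T + ε⁻¹ * r ^ ε) ^ 2 ≤ 2 * T ^ 2 + 2 * (ε⁻¹ * r ^ ε) ^ 2 := by
      nlinarith [sq_nonneg (T - ε⁻¹ * r ^ ε)]
    have hrε : (r ^ ε) ^ 2 ≤ (1 + r ^ 2) ^ ε := by
      have h1 : (r ^ ε) ^ 2 = (r ^ (2:ℕ)) ^ ε := by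
        rw [← Real.rpow_natCast (r ^ ε) 2, ← Real.rpow_natCast r 2,
          ← Real.rpow_mul hrnn, ← Real.rpow_mul hrnn, mul_comm]
      rw [h1]
      exact Real.rpow_le_rpow (by positivity) (by nlinarith) hε.le
    -- combine
    have hεrnn : (0:ℝ) ≤ ε⁻¹ * r ^ ε := by positivity
    have step1 : |Real.exp (-t * r ^ α) - Real.exp (-t * r ^ (2:ℝ))| ^ 2 * (1 + r ^ 2) ^ (-s)
        ≤ (2 - α) ^ 2 * ((T + ε⁻¹ * r ^ ε) ^ 2 * (1 + r ^ 2) ^ (-s)) := by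
      calc |Real.exp (-t * r ^ α) - Real.exp (-t * r ^ (2:ℝ))| ^ 2 * (1 + r ^ 2) ^ (-s)
          ≤ ((2 - α) * (T + ε⁻¹ * r ^ ε)) ^ 2 * (1 + r ^ 2) ^ (-s) :=
            mul_le_mul_of_nonneg_right hsq hwnn
        _ = (2 - α) ^ 2 * ((T + ε⁻¹ * r ^ ε) ^ 2 * (1 + r ^ 2) ^ (-s)) := by ring
    refine step1.trans ?_
    apply mul_le_mul_of_nonneg_left _ (by positivity : (0:ℝ) ≤ (2 - α) ^ 2)
    -- (T + ε⁻¹ r^ε)^2 * (1+r²)^{-s} ≤ K * (1+r²)^{ε-s}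
    have hws : (1 + r ^ 2) ^ (-s) ≤ (1 + r ^ 2) ^ (ε - s) :=
      Real.rpow_le_rpow_of_exponent_le (by nlinarith) (by linarith)
    have hmul : (1 + r ^ 2) ^ ε * (1 + r ^ 2) ^ (-s) = (1 + r ^ 2) ^ (ε - s) := by
      rw [← Real.rpow_add hbase]; ring_nf
    calc (T + ε⁻¹ * r ^ ε) ^ 2 * (1 + r ^ 2) ^ (-s)
        ≤ (2 * T ^ 2 + 2 * (ε⁻¹ * r ^ ε) ^ 2) * (1 + r ^ 2) ^ (-s) :=
          mul_le_mul_of_nonneg_right hsum hwnn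
      _ = 2 * T ^ 2 * (1 + r ^ 2) ^ (-s)
          + 2 * ε⁻¹ ^ 2 * ((r ^ ε) ^ 2 * (1 + r ^ 2) ^ (-s)) := by ring
      _ ≤ 2 * T ^ 2 * (1 + r ^ 2) ^ (ε - s)
          + 2 * ε⁻¹ ^ 2 * ((1 + r ^ 2) ^ ε * (1 + r ^ 2) ^ (-s)) := by
          have h1 : 2 * T ^ 2 * (1 + r ^ 2) ^ (-s) ≤ 2 * T ^ 2 * (1 + r ^ 2) ^ (ε - s) :=
            mul_le_mul_of_nonneg_left hws (by positivity)
          have h2 : (r ^ ε) ^ 2 * (1 + r ^ 2) ^ (-s)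
              ≤ (1 + r ^ 2) ^ ε * (1 + r ^ 2) ^ (-s) :=
            mul_le_mul_of_nonneg_right hrε hwnn
          have h3 : 2 * ε⁻¹ ^ 2 * ((r ^ ε) ^ 2 * (1 + r ^ 2) ^ (-s))
              ≤ 2 * ε⁻¹ ^ 2 * ((1 + r ^ 2) ^ ε * (1 + r ^ 2) ^ (-s)) :=
            mul_le_mul_of_nonneg_left h2 (by positivity)
          linarith
      _ = K * ((1:ℝ) + r ^ 2) ^ (ε - s) := by rw [hmul, hK]; ring
  -- integrate the pointwise bound
  have hmono : (∫ ξ : E n, |Real.exp (-t * ‖ξ‖ ^ α) - Real.exp (-t * ‖ξ‖ ^ (2:ℝ))| ^ 2 *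
      (1 + ‖ξ‖ ^ 2) ^ (-s))
      ≤ ∫ ξ : E n, (2 - α) ^ 2 * (K * ((1:ℝ) + ‖ξ‖ ^ 2) ^ (ε - s)) := by
    apply integral_mono_of_nonneg
    · filter_upwards with ξ
      positivity
    · exact hintK.const_mul _
    · filter_upwards with ξ
      exact hpt ξ
  have heq : (∫ ξ : E n, (2 - α) ^ 2 * (K * ((1:ℝ) + ‖ξ‖ ^ 2) ^ (ε - s)))
      = (2 - α) ^ 2 * I := by
    rw [hI, MeasureTheory.integral_const_mul]
  refine hmono.trans ?_
  rw [heq, hCsq]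
  have : I ≤ max I 1 := le_max_left _ _
  calc (2 - α) ^ 2 * I ≤ (2 - α) ^ 2 * max I 1 :=
        mul_le_mul_of_nonneg_left this (by positivity)
    _ = max I 1 * (2 - α) ^ 2 := mul_comm _ _
end
end

section
/- Let s₁, s₂ ≥ 0 and ε > 0. There exists a constant C = C(n, s₂, ε) such that for every 1 < α < 2, every t₁, t₂ > ε, and every φ ∈ Ḣ^{s₁}(ℝⁿ): ‖p_α(t₁,·)*φ − p_α(t₂,·)*φ‖_{Ḣ^{s₁+s₂}} ≤ C·|t₁ − t₂|^{1/2}·‖φ‖_{Ḣ^{s₁}}. -/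
open MeasureTheory Real ENNReal Filter Set
noncomputable section

-- core kernel bound
lemma key_bound (s₂ ε : ℝ) (hs₂ : 0 ≤ s₂) (hε : 0 < ε) {α t₁ t₂ : ℝ}
    (hα1 : 1 ≤ α) (hα2 : α ≤ 2) (ht₁ : ε ≤ t₁) (ht₂ : ε ≤ t₂) (r : ℝ) (hr : 0 ≤ r) :
    r ^ (2*s₂) * |Real.exp (-t₁ * r^α) - Real.exp (-t₂ * r^α)| ^ 2 ≤
      (1 + Nat.factorial (Nat.ceil (2*s₂+2)) / (2*ε) ^ (Nat.ceil (2*s₂+2))) * |t₁ - t₂| := by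
  set k := Nat.ceil (2*s₂+2) with hk
  set M : ℝ := 1 + Nat.factorial k / (2*ε) ^ k with hM
  clear_value M k
  wlog h : t₁ ≤ t₂ generalizing t₁ t₂
  · rw [abs_sub_comm (Real.exp _), abs_sub_comm t₁]
    exact this ht₂ ht₁  (le_of_not_ge h)
  set x := r ^ α with hx
  have hx0 : 0 ≤ x := Real.rpow_nonneg hr α
  clear_value x
  have hδ : 0 ≤ t₂ - t₁ := sub_nonneg.2 h
  have habs : |t₁ - t₂| = t₂ - t₁ := by rw [abs_sub_comm]; exact abs_of_nonneg hδ
  -- d := exp(-t₁x) - exp(-t₂x) ≥ 0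
  have hd0 : 0 ≤ Real.exp (-t₁ * x) - Real.exp (-t₂ * x) := by
    have : -t₂ * x ≤ -t₁ * x := by nlinarith
    simpa using Real.exp_le_exp.2 this
  have hdabs : |Real.exp (-t₁ * x) - Real.exp (-t₂ * x)| =
      Real.exp (-t₁ * x) - Real.exp (-t₂ * x) := abs_of_nonneg hd0
  -- d = exp(-t₁x)(1 - exp(-(t₂-t₁)x))
  have hfact : Real.exp (-t₁ * x) - Real.exp (-t₂ * x)
      = Real.exp (-t₁*x) * (1 - Real.exp (-((t₂-t₁)*x))) := by
    rw [mul_sub, mul_one, ← Real.exp_add]; ring_nf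
  have h1 : 1 - Real.exp (-((t₂-t₁)*x)) ≤ 1 := by
    nlinarith [Real.exp_nonneg (-((t₂-t₁)*x))]
  have h2 : 1 - Real.exp (-((t₂-t₁)*x)) ≤ (t₂-t₁)*x := by
    nlinarith [Real.add_one_le_exp (-((t₂-t₁)*x))]
  have h3 : 0 ≤ 1 - Real.exp (-((t₂-t₁)*x)) := by
    have : Real.exp (-((t₂-t₁)*x)) ≤ 1 := Real.exp_le_one_iff.2 (by nlinarith)
    linarith
  have hεx : Real.exp (-t₁*x) ≤ Real.exp (-(ε*x)) :=
    Real.exp_le_exp.2 (by nlinarith)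
  -- d² ≤ exp(-2εx) * (t₂-t₁) * x
  have hd2 : (Real.exp (-t₁ * x) - Real.exp (-t₂ * x))^2
      ≤ Real.exp (-(2*ε*x)) * ((t₂-t₁) * x) := by
    have hmin : (1 - Real.exp (-((t₂-t₁)*x)))^2 ≤ (t₂-t₁)*x := by
      rcases le_total ((t₂-t₁)*x) 1 with hle | hle
      · nlinarith
      · nlinarith
    have hexp2 : Real.exp (-t₁*x) ^ 2 ≤ Real.exp (-(2*ε*x)) := by
      calc Real.exp (-t₁*x) ^ 2 ≤ Real.exp (-(ε*x)) ^ 2 := by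
            exact pow_le_pow_left₀ (Real.exp_nonneg _) hεx 2
        _ = Real.exp (-(2*ε*x)) := by rw [← Real.exp_nat_mul]; ring_nf
    calc (Real.exp (-t₁ * x) - Real.exp (-t₂ * x))^2
        = Real.exp (-t₁*x)^2 * (1 - Real.exp (-((t₂-t₁)*x)))^2 := by rw [hfact]; ring
      _ ≤ Real.exp (-(2*ε*x)) * ((t₂-t₁)*x) := by
          apply mul_le_mul hexp2 hmin (by positivity) (Real.exp_nonneg _)
  -- the sup bound: r^{2s₂} * x * exp(-2εx) ≤ M
  have hsup : r ^ (2*s₂) * (x * Real.exp (-(2*ε*x))) ≤ M := by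
    have hk2 : (2*s₂+2 : ℝ) ≤ k := by rw [hk]; exact Nat.le_ceil _
    have hMfrac : (0:ℝ) ≤ Nat.factorial k / (2*ε)^k := by positivity
    rcases le_total r 1 with hr1 | hr1
    · have ha : r ^ (2*s₂) ≤ 1 := Real.rpow_le_one hr hr1 (by positivity)
      have hb : x ≤ 1 := hx ▸ Real.rpow_le_one hr hr1 (by linarith)
      have hc : Real.exp (-(2*ε*x)) ≤ 1 := Real.exp_le_one_iff.2 (by nlinarith)
      have : r ^ (2*s₂) * (x * Real.exp (-(2*ε*x))) ≤ 1 := by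
        calc r ^ (2*s₂) * (x * Real.exp (-(2*ε*x))) ≤ 1 * (1 * 1) := by
              apply mul_le_mul ha _ (by positivity) (by norm_num)
              apply mul_le_mul hb hc (Real.exp_nonneg _) (by norm_num)
          _ = 1 := by ring
      rw [hM]; linarith
    · -- r ≥ 1
      have hrx : r ≤ x := by
        rw [hx]
        calc r = r ^ (1:ℝ) := (Real.rpow_one r).symm
          _ ≤ r ^ α := Real.rpow_le_rpow_of_exponent_le hr1 (by linarith)
      have hexpmon : Real.exp (-(2*ε*x)) ≤ Real.exp (-(2*ε*r)) := by
        have h2 : 2*ε*r ≤ 2*ε*x :=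
          mul_le_mul_of_nonneg_left hrx (by linarith)
        exact Real.exp_le_exp.2 (by linarith)
      have hpow : r ^ (2*s₂) * x ≤ r ^ (k:ℝ) := by
        rw [hx]
        calc r ^ (2*s₂) * r ^ α = r ^ (2*s₂ + α) := (Real.rpow_add (by linarith) _ _).symm
          _ ≤ r ^ (k:ℝ) := Real.rpow_le_rpow_of_exponent_le hr1 (by push_cast; linarith)
      have hrk : r ^ (k:ℝ) = r ^ k := by rw [Real.rpow_natCast]
      have hfac : r ^ k * Real.exp (-(2*ε*r)) ≤ Nat.factorial k / (2*ε)^k := by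
        have h := Real.pow_div_factorial_le_exp (x := 2*ε*r) (by positivity) k
        have hek : (0:ℝ) < Real.exp (2*ε*r) := Real.exp_pos _
        have hfk : (0:ℝ) < (Nat.factorial k : ℝ) := by positivity
        have h2ε : (0:ℝ) < (2*ε)^k := by positivity
        rw [div_le_iff₀ hfk] at h
        have hrk2 : r ^ k ≤ Nat.factorial k / (2*ε)^k * Real.exp (2*ε*r) := by
          rw [div_mul_eq_mul_div, le_div_iff₀ h2ε]
          calc r ^ k * (2*ε)^k = (2*ε*r)^k := by rw [mul_pow]; ring
            _ ≤ Real.exp (2*ε*r) * Nat.factorial k := h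
            _ = Nat.factorial k * Real.exp (2*ε*r) := by ring
        calc r ^ k * Real.exp (-(2*ε*r))
            ≤ (Nat.factorial k / (2*ε)^k * Real.exp (2*ε*r)) * Real.exp (-(2*ε*r)) :=
              mul_le_mul_of_nonneg_right hrk2 (Real.exp_nonneg _)
          _ = Nat.factorial k / (2*ε)^k := by
              rw [mul_assoc, ← Real.exp_add]; simp
      calc r ^ (2*s₂) * (x * Real.exp (-(2*ε*x)))
          ≤ (r ^ (2*s₂) * x) * Real.exp (-(2*ε*r)) := by
            rw [← mul_assoc]
            exact mul_le_mul_of_nonneg_left hexpmon (by positivity)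
        _ ≤ r ^ k * Real.exp (-(2*ε*r)) := by
            rw [← hrk]
            exact mul_le_mul_of_nonneg_right hpow (Real.exp_nonneg _)
        _ ≤ Nat.factorial k / (2*ε)^k := hfac
        _ ≤ M := by rw [hM]; linarith
  calc r ^ (2*s₂) * |Real.exp (-t₁ * x) - Real.exp (-t₂ * x)| ^ 2
      ≤ r ^ (2*s₂) * (Real.exp (-(2*ε*x)) * ((t₂-t₁)*x)) := by
        rw [hdabs]; exact mul_le_mul_of_nonneg_left hd2 (Real.rpow_nonneg hr _)
    _ = (r ^ (2*s₂) * (x * Real.exp (-(2*ε*x)))) * (t₂-t₁) := by ring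
    _ ≤ M * (t₂-t₁) := mul_le_mul_of_nonneg_right hsup hδ
    _ = M * |t₁-t₂| := by rw [habs]

theorem stmt5 (n : ℕ) (s₁ s₂ ε : ℝ) (hs₁ : 0 ≤ s₁) (hs₂ : 0 ≤ s₂) (hε : 0 < ε) :
    ∃ C > 0, ∀ α : ℝ, 1 < α → α < 2 → ∀ t₁ t₂ : ℝ, ε < t₁ → ε < t₂ → ∀ φhat : E n → ℂ,
      (∫⁻ ξ : E n, ENNReal.ofReal
          (‖ξ‖ ^ (2 * (s₁ + s₂)) *
            |Real.exp (-t₁ * ‖ξ‖ ^ α) - Real.exp (-t₂ * ‖ξ‖ ^ α)| ^ 2 * ‖φhat ξ‖ ^ 2)) ≤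
        ENNReal.ofReal (C ^ 2 * |t₁ - t₂|) *
          ∫⁻ ξ : E n, ENNReal.ofReal (‖ξ‖ ^ (2 * s₁) * ‖φhat ξ‖ ^ 2) := by
  set M : ℝ := 1 + Nat.factorial (Nat.ceil (2*s₂+2)) / (2*ε) ^ (Nat.ceil (2*s₂+2)) with hM
  have hM0 : 0 < M := by rw [hM]; positivity
  refine ⟨Real.sqrt M, Real.sqrt_pos.2 hM0, ?_⟩
  intro α hα1 hα2 t₁ t₂ ht₁ ht₂ φhat
  have hC2 : Real.sqrt M ^ 2 = M := Real.sq_sqrt hM0.le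
  rw [hC2]
  have hpt : ∀ ξ : E n,
      ENNReal.ofReal (‖ξ‖ ^ (2 * (s₁ + s₂)) *
          |Real.exp (-t₁ * ‖ξ‖ ^ α) - Real.exp (-t₂ * ‖ξ‖ ^ α)| ^ 2 * ‖φhat ξ‖ ^ 2)
      ≤ ENNReal.ofReal (M * |t₁ - t₂|) *
          ENNReal.ofReal (‖ξ‖ ^ (2 * s₁) * ‖φhat ξ‖ ^ 2) := by
    intro ξ
    rw [← ENNReal.ofReal_mul (by positivity)]
    apply ENNReal.ofReal_le_ofReal
    set r := ‖ξ‖ with hrdef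
    have hr : 0 ≤ r := norm_nonneg _
    have hkey := key_bound s₂ ε hs₂ hε (α := α) (t₁ := t₁) (t₂ := t₂)
      hα1.le hα2.le ht₁.le ht₂.le r hr
    rw [← hM] at hkey
    rcases hr.eq_or_lt with h0 | h0
    · have hz : r ^ α = 0 := by
        rw [← h0, Real.zero_rpow (by linarith)]
      rw [hz]
      simp only [mul_zero, neg_mul, neg_zero, Real.exp_zero, sub_self, abs_zero,
        zero_pow, mul_zero, zero_mul]
      have : (0:ℝ) ≤ M * |t₁ - t₂| * (r ^ (2*s₁) * ‖φhat ξ‖ ^ 2) :=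
        mul_nonneg (mul_nonneg hM0.le (abs_nonneg _)) (by positivity)
      simpa using this
    · have hsplit : r ^ (2 * (s₁ + s₂)) = r ^ (2*s₁) * r ^ (2*s₂) := by
        rw [show 2 * (s₁ + s₂) = 2*s₁ + 2*s₂ by ring, Real.rpow_add h0]
      rw [hsplit]
      calc r ^ (2*s₁) * r ^ (2*s₂) *
            |Real.exp (-t₁ * r ^ α) - Real.exp (-t₂ * r ^ α)| ^ 2 * ‖φhat ξ‖ ^ 2
          = (r ^ (2*s₂) * |Real.exp (-t₁ * r ^ α) - Real.exp (-t₂ * r ^ α)| ^ 2) *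
              (r ^ (2*s₁) * ‖φhat ξ‖ ^ 2) := by ring
        _ ≤ (M * |t₁ - t₂|) * (r ^ (2*s₁) * ‖φhat ξ‖ ^ 2) :=
            mul_le_mul_of_nonneg_right hkey (by positivity)
  calc (∫⁻ ξ : E n, ENNReal.ofReal
          (‖ξ‖ ^ (2 * (s₁ + s₂)) *
            |Real.exp (-t₁ * ‖ξ‖ ^ α) - Real.exp (-t₂ * ‖ξ‖ ^ α)| ^ 2 * ‖φhat ξ‖ ^ 2))
      ≤ ∫⁻ ξ : E n, ENNReal.ofReal (M * |t₁ - t₂|) *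
          ENNReal.ofReal (‖ξ‖ ^ (2 * s₁) * ‖φhat ξ‖ ^ 2) := lintegral_mono hpt
    _ = ENNReal.ofReal (M * |t₁ - t₂|) *
          ∫⁻ ξ : E n, ENNReal.ofReal (‖ξ‖ ^ (2 * s₁) * ‖φhat ξ‖ ^ 2) :=
        lintegral_const_mul' _ _ ENNReal.ofReal_ne_top
end
end
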